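/- arXiv:2010.03906 — 2 statements merged into one kernel-verified Lean document; each statement's English description precedes it below -/
import Mathlib

section
/- Let β ∈ [0,1), F an m-dimensional subspace of ℝ^n, and u : F → F⊥ Lipschitz with Lipschitz constant at most β. If x ∈ F is a point where u is differentiable with derivative Du(x), and p = x + u(x), then the angle between the tangent plane T_p(graph u) := {v + Du(x)v : v ∈ F} and F satisfies ∠(T_p(graph u), F) ≤ ‖Du(x)‖ ≤ β. -/
open Metric Real Filter
open scoped RealInnerProductSpace

noncomputable def pr {n : ℕ} (F : Submodule ℝ (EuclideanSpace ℝ (Fin n))) :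
    EuclideanSpace ℝ (Fin n) →L[ℝ] EuclideanSpace ℝ (Fin n) :=
  F.subtypeL.comp (F.orthogonalProjection)

noncomputable def graphSet {n : ℕ} (F : Submodule ℝ (EuclideanSpace ℝ (Fin n)))
    (u : F → Fᗮ) : Set (EuclideanSpace ℝ (Fin n)) :=
  Set.range fun z : F => (z : EuclideanSpace ℝ (Fin n)) + (u z : EuclideanSpace ℝ (Fin n))

noncomputable def cone {n : ℕ} (x : EuclideanSpace ℝ (Fin n)) (β : ℝ)
    (F : Submodule ℝ (EuclideanSpace ℝ (Fin n))) : Set (EuclideanSpace ℝ (Fin n)) :=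
  {z | ‖pr Fᗮ (z - x)‖ ≤ β * ‖pr F (z - x)‖}

/-- The tangent plane to the graph of a Lipschitz function at a point of
differentiability: the image of `F` under `v ↦ v + Du(x)v`. -/
noncomputable def tangentPlane {n : ℕ} (F : Submodule ℝ (EuclideanSpace ℝ (Fin n)))
    (Du : F →L[ℝ] Fᗮ) : Submodule ℝ (EuclideanSpace ℝ (Fin n)) :=
  LinearMap.range (F.subtype + Fᗮ.subtype ∘ₗ Du.toLinearMap)

section aux
variable {n : ℕ} {F : Submodule ℝ (EuclideanSpace ℝ (Fin n))} {Du : F →L[ℝ] Fᗮ}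

local notation "E" => EuclideanSpace ℝ (Fin n)

lemma pr_apply (K : Submodule ℝ E) (z : E) :
    pr K z = (Submodule.orthogonalProjection K z : E) := rfl

lemma mem_tangentPlane_iff (w : E) :
    w ∈ tangentPlane F Du ↔ ∃ v : F, (v : E) + (Du v : E) = w := by
  simp [tangentPlane, LinearMap.mem_range]

lemma inner_F_perp {a b : E} (ha : a ∈ F) (hb : b ∈ Fᗮ) : ⟪a, b⟫ = 0 :=
  (Submodule.mem_orthogonal F b).mp hb a ha

-- (A): for w ∈ T, ‖w - pr F w‖ ≤ ‖Du‖ * ‖w‖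
lemma keyA {w : E} (hw : w ∈ tangentPlane F Du) :
    ‖w - pr F w‖ ≤ ‖Du‖ * ‖w‖ := by
  obtain ⟨v, rfl⟩ := (mem_tangentPlane_iff w).mp hw
  have hprF : pr F ((v : E) + (Du v : E)) = v := by
    rw [pr_apply]
    exact Submodule.eq_starProjection_of_mem_orthogonal' v.2 (Du v).2 rfl
  rw [hprF, add_sub_cancel_left]
  have h1 : ‖(Du v : E)‖ ≤ ‖Du‖ * ‖v‖ := Du.le_opNorm v
  have h2 : (‖(v : E)‖ : ℝ) ≤ ‖(v : E) + (Du v : E)‖ := by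
    have hin : ⟪(v : E), (Du v : E)⟫ = 0 := inner_F_perp v.2 (Du v).2
    have := norm_add_sq_real (v : E) (Du v : E)
    nlinarith [norm_nonneg (v : E), norm_nonneg ((v : E) + (Du v : E)), sq_nonneg ‖(Du v : E)‖]
  calc ‖(Du v : E)‖ ≤ ‖Du‖ * ‖v‖ := h1
    _ ≤ ‖Du‖ * ‖(v : E) + (Du v : E)‖ := by
        exact mul_le_mul_of_nonneg_left h2 (norm_nonneg Du)

-- distance from points of F to T
lemma keyDist (w : F) :
    ‖(w : E) - pr (tangentPlane F Du) (w : E)‖ ≤ ‖Du‖ * ‖w‖ := by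
  set T := tangentPlane F Du
  have ht : (w : E) + (Du w : E) ∈ T := (mem_tangentPlane_iff _).mpr ⟨w, rfl⟩
  have hperp : (w : E) - pr T (w : E) ∈ Tᗮ := Submodule.sub_starProjection_mem_orthogonal _
  have hmemT : (pr T (w : E) : E) - ((w : E) + (Du w : E)) ∈ T :=
    T.sub_mem (Submodule.orthogonalProjection T (w : E)).2 ht
  have hin : ⟪(w : E) - pr T (w : E), pr T (w : E) - ((w : E) + (Du w : E))⟫ = 0 := by
    have := (Submodule.mem_orthogonal T _).mp hperp _ hmemT
    rwa [real_inner_comm] at this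
  have hpyth : ‖(w : E) - ((w : E) + (Du w : E))‖ ^ 2
      = ‖(w : E) - pr T (w : E)‖ ^ 2 + ‖pr T (w : E) - ((w : E) + (Du w : E))‖ ^ 2 := by
    have hsum : (w : E) - ((w : E) + (Du w : E))
        = ((w : E) - pr T (w : E)) + (pr T (w : E) - ((w : E) + (Du w : E))) := by abel
    rw [hsum, norm_add_sq_real, hin]; ring
  have h1 : ‖(w : E) - pr T (w : E)‖ ≤ ‖(w : E) - ((w : E) + (Du w : E))‖ := by
    nlinarith [norm_nonneg ((w : E) - pr T (w : E)),
      norm_nonneg ((w : E) - ((w : E) + (Du w : E))),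
      sq_nonneg ‖pr T (w : E) - ((w : E) + (Du w : E))‖]
  have h2 : ‖(w : E) - ((w : E) + (Du w : E))‖ = ‖(Du w : E)‖ := by
    rw [sub_add_eq_sub_sub, sub_self, zero_sub, norm_neg]
  calc ‖(w : E) - pr T (w : E)‖ ≤ ‖(Du w : E)‖ := by rw [← h2]; exact h1
    _ ≤ ‖Du‖ * ‖w‖ := Du.le_opNorm w

-- (B): for y ∈ Tᗮ, ‖pr F y‖ ≤ ‖Du‖ * ‖y‖
lemma keyB {y : E} (hy : y ∈ (tangentPlane F Du)ᗮ) :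
    ‖pr F y‖ ≤ ‖Du‖ * ‖y‖ := by
  set T := tangentPlane F Du
  set w : F := Submodule.orthogonalProjection F y with hw
  have hprw : pr F y = (w : E) := rfl
  have hsq : ‖(w : E)‖ ^ 2 = ⟪y, (w : E)⟫ := by
    have hperp : y - (w : E) ∈ Fᗮ := Submodule.sub_starProjection_mem_orthogonal _
    have h0 : ⟪y - (w : E), (w : E)⟫ = 0 := by
      have := (Submodule.mem_orthogonal F _).mp hperp _ w.2
      rwa [real_inner_comm] at this
    have := inner_sub_left (𝕜 := ℝ) y (w : E) (w : E)
    rw [h0] at this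
    have hww : ⟪(w : E), (w : E)⟫ = ‖(w : E)‖ ^ 2 := real_inner_self_eq_norm_sq _
    linarith [this.symm, hww]
  have hsplit : ⟪y, (w : E)⟫ = ⟪y, (w : E) - pr T (w : E)⟫ := by
    have h0 : ⟪y, (pr T (w : E) : E)⟫ = 0 := by
      have := (Submodule.mem_orthogonal T y).mp hy _ (Submodule.orthogonalProjection T (w : E)).2
      rwa [real_inner_comm] at this
    have := inner_sub_right (𝕜 := ℝ) y (w : E) (pr T (w : E))
    rw [h0] at this
    linarith [this]
  have hb : ⟪y, (w : E)⟫ ≤ ‖y‖ * (‖Du‖ * ‖w‖) := by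
    rw [hsplit]
    calc ⟪y, (w : E) - pr T (w : E)⟫ ≤ ‖y‖ * ‖(w : E) - pr T (w : E)‖ :=
          real_inner_le_norm _ _
      _ ≤ ‖y‖ * (‖Du‖ * ‖w‖) :=
          mul_le_mul_of_nonneg_left (keyDist w) (norm_nonneg y)
  rw [hprw]
  rcases eq_or_lt_of_le (norm_nonneg (w : E)) with h0 | h0
  · rw [← h0]
    positivity
  · have hnw : ‖(w : E)‖ = ‖w‖ := rfl
    have : ‖(w : E)‖ ^ 2 ≤ ‖y‖ * (‖Du‖ * ‖(w : E)‖) := by rw [hsq, hnw]; exact hb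
    nlinarith
end aux


/-- Lemma B.1: if `u : F → F⊥` is `β`-Lipschitz, `β < 1`, and differentiable at
`x` with derivative `Du`, then `∠(T_p(graph u), F) ≤ ‖Du(x)‖ ≤ β`. -/
theorem angle_tangentPlane_le {n m : ℕ} (β : ℝ) (hβ0 : 0 ≤ β) (hβ1 : β < 1)
    (F : Submodule ℝ (EuclideanSpace ℝ (Fin n))) (hF : Module.finrank ℝ F = m)
    (u : F → Fᗮ) (hu : ∀ a b : F, ‖u a - u b‖ ≤ β * ‖a - b‖)
    (x : F) (Du : F →L[ℝ] Fᗮ) (hDu : HasFDerivAt u Du x) :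
    ‖pr (tangentPlane F Du) - pr F‖ ≤ ‖Du‖ ∧ ‖Du‖ ≤ β := by
  have hDuβ : ‖Du‖ ≤ β :=
    hDu.le_of_lip' hβ0 (Filter.Eventually.of_forall fun y => hu y x)
  refine ⟨?_, hDuβ⟩
  set T := tangentPlane F Du with hT
  refine ContinuousLinearMap.opNorm_le_bound _ (norm_nonneg Du) fun z => ?_
  set a1 : EuclideanSpace ℝ (Fin n) := pr T z - pr F (pr T z) with ha1
  set a2 : EuclideanSpace ℝ (Fin n) := pr F (z - pr T z) with ha2
  have hdecomp : (pr T - pr F) z = a1 - a2 := by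
    simp only [ContinuousLinearMap.sub_apply, ha1, ha2, map_sub]
    abel
  have ha1mem : a1 ∈ Fᗮ := Submodule.sub_starProjection_mem_orthogonal _
  have ha2mem : a2 ∈ F := (Submodule.orthogonalProjection F _).2
  have hin : ⟪a1, a2⟫ = 0 := by
    have := (Submodule.mem_orthogonal F a1).mp ha1mem a2 ha2mem
    rwa [real_inner_comm] at this
  have hnormsq : ‖a1 - a2‖ ^ 2 = ‖a1‖ ^ 2 + ‖a2‖ ^ 2 := by
    rw [norm_sub_sq_real, hin]; ring
  have hb1 : ‖a1‖ ≤ ‖Du‖ * ‖pr T z‖ := keyA (Submodule.orthogonalProjection T z).2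
  have hb2 : ‖a2‖ ≤ ‖Du‖ * ‖z - pr T z‖ := keyB (Submodule.sub_starProjection_mem_orthogonal _)
  have hzsq : ‖pr T z‖ ^ 2 + ‖z - pr T z‖ ^ 2 = ‖z‖ ^ 2 := by
    have h0 : ⟪z - pr T z, (pr T z : EuclideanSpace ℝ (Fin n))⟫ = 0 := by
      have := (Submodule.mem_orthogonal T (z - pr T z)).mp
        (Submodule.sub_starProjection_mem_orthogonal z) _ (Submodule.orthogonalProjection T z).2
      rwa [real_inner_comm] at this
    have hz : z = (z - pr T z) + pr T z := by abel
    calc ‖pr T z‖ ^ 2 + ‖z - pr T z‖ ^ 2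
        = ‖(z - pr T z) + pr T z‖ ^ 2 := by rw [norm_add_sq_real, h0]; ring
      _ = ‖z‖ ^ 2 := by rw [← hz]
  have hfinal : ‖a1 - a2‖ ^ 2 ≤ (‖Du‖ * ‖z‖) ^ 2 := by
    rw [hnormsq]
    have h1 : ‖a1‖ ^ 2 ≤ (‖Du‖ * ‖pr T z‖) ^ 2 :=
      pow_le_pow_left₀ (norm_nonneg _) hb1 2
    have h2 : ‖a2‖ ^ 2 ≤ (‖Du‖ * ‖z - pr T z‖) ^ 2 :=
      pow_le_pow_left₀ (norm_nonneg _) hb2 2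
    calc ‖a1‖ ^ 2 + ‖a2‖ ^ 2
        ≤ (‖Du‖ * ‖pr T z‖) ^ 2 + (‖Du‖ * ‖z - pr T z‖) ^ 2 := add_le_add h1 h2
      _ = ‖Du‖ ^ 2 * (‖pr T z‖ ^ 2 + ‖z - pr T z‖ ^ 2) := by ring
      _ = ‖Du‖ ^ 2 * ‖z‖ ^ 2 := by rw [hzsq]
      _ = (‖Du‖ * ‖z‖) ^ 2 := by ring
  rw [hdecomp]
  nlinarith [norm_nonneg (a1 - a2), norm_nonneg z, norm_nonneg Du,
    mul_nonneg (norm_nonneg Du) (norm_nonneg z)]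
end

section
/- Let F, G be m-dimensional subspaces of ℝ^n with principal angles θ_1 ≤ … ≤ θ_m, and define the combined angle θ ∈ [0, π/2] by cos θ := ∏_{i=1}^m cos θ_i. Then sin θ_m ≤ sin θ ≤ √m · sin θ_m. -/
open Metric Real Filter

lemma aux_one_sub_prod_le {ι : Type*} (s : Finset ι) (a : ι → ℝ)
    (h0 : ∀ i, 0 ≤ a i) (h1 : ∀ i, a i ≤ 1) :
    1 - ∏ i ∈ s, a i ≤ ∑ i ∈ s, (1 - a i) := by
  classical
  refine Finset.induction_on s (by simp) ?_
  intro j s hj ih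
  rw [Finset.prod_insert hj, Finset.sum_insert hj]
  have hp0 : 0 ≤ ∏ i ∈ s, a i := Finset.prod_nonneg fun i _ => h0 i
  have hp1 : ∏ i ∈ s, a i ≤ 1 := Finset.prod_le_one (fun i _ => h0 i) fun i _ => h1 i
  nlinarith [h0 j, h1 j]

/-- Combined angle: if `θ₁ ≤ … ≤ θ_m` are the principal angles of `F` and `G`
(encoded via orthonormal principal bases) and `θ ∈ [0,π/2]` satisfies
`cos θ = ∏ cos θᵢ`, then `sin θ_m ≤ sin θ ≤ √m · sin θ_m`. -/
theorem sin_combined_angle_bounds {n m : ℕ} (hm : 1 ≤ m)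
    (F G : Submodule ℝ (EuclideanSpace ℝ (Fin n)))
    (hF : Module.finrank ℝ F = m) (hG : Module.finrank ℝ G = m)
    (θi : Fin m → ℝ) (hθmono : Monotone θi)
    (hθmem : ∀ i, θi i ∈ Set.Icc 0 (π / 2))
    (x y : Fin m → EuclideanSpace ℝ (Fin n))
    (hxon : Orthonormal ℝ x) (hyon : Orthonormal ℝ y)
    (hxspan : Submodule.span ℝ (Set.range x) = F)
    (hyspan : Submodule.span ℝ (Set.range y) = G)
    (hinner : ∀ i j, (inner ℝ (x i) (y j) : ℝ) =
      if i = j then Real.cos (θi i) else 0)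
    (θ : ℝ) (hθ : θ ∈ Set.Icc 0 (π / 2))
    (hcos : Real.cos θ = ∏ i, Real.cos (θi i)) :
    Real.sin (θi ⟨m - 1, by omega⟩) ≤ Real.sin θ ∧
    Real.sin θ ≤ Real.sqrt m * Real.sin (θi ⟨m - 1, by omega⟩) := by

  set M : Fin m := ⟨m - 1, by omega⟩ with hMdef
  have hle : ∀ i, θi i ≤ θi M := by
    intro i
    exact hθmono (by simp [hMdef, Fin.le_def]; omega)
  have hcos0 : ∀ i, 0 ≤ Real.cos (θi i) := fun i =>
    Real.cos_nonneg_of_mem_Icc ⟨by linarith [(hθmem i).1, Real.pi_pos], (hθmem i).2⟩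
  have hcos1 : ∀ i, Real.cos (θi i) ≤ 1 := fun i => Real.cos_le_one _
  have hsin0 : ∀ i, 0 ≤ Real.sin (θi i) := fun i =>
    Real.sin_nonneg_of_nonneg_of_le_pi (hθmem i).1 (by linarith [(hθmem i).2, Real.pi_pos])
  have hθ0 : 0 ≤ θ := hθ.1
  have hθpi : θ ≤ π := by linarith [hθ.2, Real.pi_pos]
  have hMpi : θi M ≤ π := by linarith [(hθmem M).2, Real.pi_pos]
  have hcosθ0 : 0 ≤ Real.cos θ :=
    Real.cos_nonneg_of_mem_Icc ⟨by linarith [Real.pi_pos], hθ.2⟩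
  have hsinθ : Real.sin θ = Real.sqrt (1 - Real.cos θ ^ 2) :=
    Real.sin_eq_sqrt_one_sub_cos_sq hθ0 hθpi
  have hsinM : Real.sin (θi M) = Real.sqrt (1 - Real.cos (θi M) ^ 2) :=
    Real.sin_eq_sqrt_one_sub_cos_sq (hθmem M).1 hMpi
  have hprodle : Real.cos θ ≤ Real.cos (θi M) := by
    rw [hcos, ← Finset.mul_prod_erase Finset.univ _ (Finset.mem_univ M)]
    calc Real.cos (θi M) * ∏ i ∈ Finset.univ.erase M, Real.cos (θi i)
        ≤ Real.cos (θi M) * 1 := by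
          apply mul_le_mul_of_nonneg_left _ (hcos0 M)
          exact Finset.prod_le_one (fun i _ => hcos0 i) fun i _ => hcos1 i
      _ = Real.cos (θi M) := mul_one _
  constructor
  · rw [hsinθ, hsinM]
    apply Real.sqrt_le_sqrt
    nlinarith [hcos0 M]
  · have hkey : 1 - Real.cos θ ^ 2 ≤ (m : ℝ) * Real.sin (θi M) ^ 2 := by
      have h1 : Real.cos θ ^ 2 = ∏ i, Real.cos (θi i) ^ 2 := by
        rw [hcos, ← Finset.prod_pow]
      have h2 : 1 - ∏ i, Real.cos (θi i) ^ 2 ≤ ∑ i, (1 - Real.cos (θi i) ^ 2) :=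
        aux_one_sub_prod_le Finset.univ _ (fun i => sq_nonneg _)
          (fun i => by nlinarith [hcos0 i, hcos1 i])
      have h3 : ∀ i, 1 - Real.cos (θi i) ^ 2 ≤ Real.sin (θi M) ^ 2 := by
        intro i
        have hpyth := Real.sin_sq_add_cos_sq (θi i)
        have hsle : Real.sin (θi i) ≤ Real.sin (θi M) := by
          rcases eq_or_lt_of_le (hle i) with h | h
          · rw [h]
          · exact le_of_lt (Real.sin_lt_sin_of_lt_of_le_pi_div_two
              (by linarith [(hθmem i).1, Real.pi_pos]) (hθmem M).2 h)
        nlinarith [hsin0 i]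
      calc 1 - Real.cos θ ^ 2 ≤ ∑ i, (1 - Real.cos (θi i) ^ 2) := by rw [h1]; exact h2
        _ ≤ ∑ _i : Fin m, Real.sin (θi M) ^ 2 := Finset.sum_le_sum fun i _ => h3 i
        _ = (m : ℝ) * Real.sin (θi M) ^ 2 := by simp [mul_comm]
    rw [hsinθ]
    calc Real.sqrt (1 - Real.cos θ ^ 2) ≤ Real.sqrt ((m : ℝ) * Real.sin (θi M) ^ 2) :=
        Real.sqrt_le_sqrt hkey
      _ = Real.sqrt m * Real.sin (θi M) := by
          rw [Real.sqrt_mul (Nat.cast_nonneg m), Real.sqrt_sq (hsin0 M)]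
end
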